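/- For j with 2 ≤ j ≤ 8 and ξ ≥ λ_j, the number ξ_j defined by (ξ_j^j − ξ_j^{j−1})/log ξ_j = ξ/log ξ (with ξ_j > 1) satisfies ξ_j ≤ (ξ/j)^{1/j}, where λ₂=80, λ₃=586, λ₄=6381, λ₅=89017, λ₆=1499750, λ₇=29511244, λ₈=663184075. -/

import Mathlib

/- ## Auxiliary lemmas -/

/-- Slope inequality for log: for `1 < a ≤ b`, `(a-1) log b ≤ (b-1) log a`. -/
lemma slope_aux (a b : ℝ) (ha : 1 < a) (hab : a ≤ b) :
    (a-1) * Real.log b ≤ (b-1) * Real.log a := by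
  have ha0 : (0:ℝ) < a := by linarith
  have hb0 : (0:ℝ) < b := by linarith
  have h1 : Real.log b - Real.log a ≤ (b-a)/a := by
    have := Real.log_le_sub_one_of_pos (show (0:ℝ) < b/a by positivity)
    rw [Real.log_div (by linarith) (by linarith)] at this
    calc Real.log b - Real.log a ≤ b/a - 1 := this
      _ = (b-a)/a := by field_simp
  have h2 : 1 - 1/a ≤ Real.log a := by
    have := Real.log_le_sub_one_of_pos (show (0:ℝ) < 1/a by positivity)
    rw [one_div, Real.log_inv] at this
    rw [one_div]; linarith
  have h1a : a * Real.log b - a * Real.log a ≤ b - a := by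
    have := mul_le_mul_of_nonneg_left h1 ha0.le
    rw [mul_div_cancel₀] at this
    · linarith [this]
    · exact ha0.ne'
  have h2a : a - 1 ≤ a * Real.log a := by
    have := mul_le_mul_of_nonneg_left h2 ha0.le
    rw [mul_sub, mul_one_div, div_self ha0.ne'] at this
    linarith
  nlinarith [mul_le_mul_of_nonneg_left h1a (by linarith : (0:ℝ) ≤ a - 1),
    mul_le_mul_of_nonneg_left h2a (by linarith : (0:ℝ) ≤ b - a), Real.log_pos ha]

/-- `(a-1)/log a` is monotone on `(1, ∞)`. -/
lemma slope_mono (a b : ℝ) (ha : 1 < a) (hab : a ≤ b) :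
    (a-1)/Real.log a ≤ (b-1)/Real.log b := by
  have hla : 0 < Real.log a := Real.log_pos ha
  have hlb : 0 < Real.log b := Real.log_pos (ha.trans_le hab)
  rw [div_le_div_iff₀ hla hlb]
  exact slope_aux a b ha hab

/-- strict monotonicity of `t ↦ t^k (t-1)/log t` on `(1,∞)` for `k ≥ 1`. -/
lemma fmono (k : ℕ) (hk : 1 ≤ k) (a b : ℝ) (ha : 1 < a) (hab : a < b) :
    a^k * ((a-1)/Real.log a) < b^k * ((b-1)/Real.log b) := by
  have hla : 0 < Real.log a := Real.log_pos ha
  have hs : (a-1)/Real.log a ≤ (b-1)/Real.log b := slope_mono a b ha hab.le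
  have hp : a^k < b^k := pow_lt_pow_left₀ hab (by linarith) (by omega)
  exact mul_lt_mul hp hs (div_pos (by linarith) hla) (pow_nonneg (by linarith) k)

/-- `t / (log t)^k` is monotone on `[e^k, ∞)`. -/
lemma psi_mono (k : ℕ) {a b : ℝ} (hk : 1 ≤ k) (ha : Real.exp k ≤ a) (hab : a ≤ b) :
    a / (Real.log a)^k ≤ b / (Real.log b)^k := by
  have hek : (1:ℝ) < Real.exp k := by
    rw [show (1:ℝ) = Real.exp 0 by simp]
    exact Real.exp_lt_exp.mpr (by exact_mod_cast hk)
  set ψ : ℝ → ℝ := fun t => Real.log t - (k:ℝ) * Real.log (Real.log t) with hψ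
  have hder : ∀ x : ℝ, 1 < x → HasDerivAt ψ (x⁻¹ - (k:ℝ) * ((Real.log x)⁻¹ * x⁻¹)) x := by
    intro x hx
    have hx0 : (0:ℝ) < x := by linarith
    have hlx : (0:ℝ) < Real.log x := Real.log_pos hx
    have h1 : HasDerivAt Real.log x⁻¹ x := Real.hasDerivAt_log hx0.ne'
    have h2 : HasDerivAt (fun t : ℝ => Real.log (Real.log t)) ((Real.log x)⁻¹ * x⁻¹) x :=
      (Real.hasDerivAt_log hlx.ne').comp x h1
    exact h1.sub (h2.const_mul (k:ℝ))
  have hmono : MonotoneOn ψ (Set.Ici (Real.exp k)) := by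
    apply monotoneOn_of_deriv_nonneg (convex_Ici _)
    · intro x hx
      exact (hder x (lt_of_lt_of_le hek hx)).continuousAt.continuousWithinAt
    · intro x hx
      rw [interior_Ici] at hx
      exact ((hder x (lt_trans hek hx)).differentiableAt).differentiableWithinAt
    · intro x hx
      rw [interior_Ici] at hx
      have hx1 : 1 < x := lt_trans hek hx
      have hx0 : (0:ℝ) < x := by linarith
      have hlx : (0:ℝ) < Real.log x := Real.log_pos hx1
      have hkx : (k:ℝ) ≤ Real.log x := by
        calc (k:ℝ) = Real.log (Real.exp k) := (Real.log_exp _).symm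
          _ ≤ Real.log x := Real.log_le_log (Real.exp_pos _) hx.le
      rw [(hder x hx1).deriv]
      have heq : x⁻¹ - (k:ℝ) * ((Real.log x)⁻¹ * x⁻¹)
          = (Real.log x - k) * ((Real.log x)⁻¹ * x⁻¹) := by
        field_simp
      rw [heq]
      exact mul_nonneg (by linarith) (by positivity)
  have hpsi := hmono ha (le_trans ha hab) hab
  have ha1 : 1 < a := lt_of_lt_of_le hek ha
  have hb1 : 1 < b := ha1.trans_le hab
  have hexp : ∀ x : ℝ, 1 < x → Real.exp (ψ x) = x / (Real.log x)^k := by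
    intro x hx
    have hx0 : (0:ℝ) < x := by linarith
    have hlx : (0:ℝ) < Real.log x := Real.log_pos hx
    rw [hψ]
    simp only []
    rw [Real.exp_sub, Real.exp_log hx0, Real.exp_nat_mul, Real.exp_log hlx]
  rw [← hexp a ha1, ← hexp b hb1]
  exact Real.exp_le_exp.mpr hpsi

lemma keyAux (l : ℝ) (jj p q : ℕ) (hl : 1 ≤ l) (hjj : 1 ≤ jj) (hq : 0 < q)
    (h1 : l ^ q ≤ (jj:ℝ) ^ p) (h2 : (jj:ℝ) * (p:ℝ)^jj ≤ l * (q:ℝ)^jj) :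
    (jj:ℝ) * (Real.log l)^jj ≤ l * (Real.log jj)^jj := by
  have hl0 : (0:ℝ) < l := by linarith
  have hjj1 : (1:ℝ) ≤ (jj:ℝ) := by exact_mod_cast hjj
  have hll : 0 ≤ Real.log l := Real.log_nonneg hl
  have hlj : 0 ≤ Real.log jj := Real.log_nonneg hjj1
  have hq0 : (0:ℝ) < (q:ℝ) := by exact_mod_cast hq
  have hlq : (q:ℝ) * Real.log l ≤ (p:ℝ) * Real.log jj := by
    rw [← Real.log_pow, ← Real.log_pow]
    exact Real.log_le_log (by positivity) h1
  have hstep : Real.log l ≤ ((p:ℝ)/q) * Real.log jj := by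
    rw [div_mul_eq_mul_div, le_div_iff₀ hq0]
    linarith
  have h3 : (Real.log l)^jj ≤ ((p:ℝ)/q)^jj * (Real.log jj)^jj := by
    rw [← mul_pow]
    exact pow_le_pow_left₀ hll hstep jj
  have h4 : (jj:ℝ) * ((p:ℝ)/q)^jj ≤ l := by
    rw [div_pow, ← mul_div_assoc, div_le_iff₀ (by positivity)]
    linarith
  calc (jj:ℝ) * (Real.log l)^jj ≤ (jj:ℝ) * (((p:ℝ)/q)^jj * (Real.log jj)^jj) :=
        mul_le_mul_of_nonneg_left h3 (by positivity)
    _ = ((jj:ℝ) * ((p:ℝ)/q)^jj) * (Real.log jj)^jj := by ring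
    _ ≤ l * (Real.log jj)^jj := mul_le_mul_of_nonneg_right h4 (by positivity)

def lamJ : ℕ → ℝ
  | 2 => 80
  | 3 => 586
  | 4 => 6381
  | 5 => 89017
  | 6 => 1499750
  | 7 => 29511244
  | 8 => 663184075
  | _ => 0

lemma keyNum (j : ℕ) (hj1 : 2 ≤ j) (hj2 : j ≤ 8) :
    (j:ℝ) * (Real.log (lamJ j))^j ≤ lamJ j * (Real.log j)^j := by
  interval_cases j
  · have h := keyAux 80 2 373 59 (by norm_num) (by norm_num) (by norm_num)
      (by exact_mod_cast (show (80:ℕ)^59 ≤ 2^373 by decide +kernel)) (by norm_num)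
    push_cast at h ⊢
    simpa [lamJ] using h
  · have h := keyAux 586 3 905 156 (by norm_num) (by norm_num) (by norm_num)
      (by exact_mod_cast (show (586:ℕ)^156 ≤ 3^905 by decide +kernel)) (by norm_num)
    push_cast at h ⊢
    simpa [lamJ] using h
  · have h := keyAux 6381 4 1245 197 (by norm_num) (by norm_num) (by norm_num)
      (by exact_mod_cast (show (6381:ℕ)^197 ≤ 4^1245 by decide +kernel)) (by norm_num)
    push_cast at h ⊢
    simpa [lamJ] using h
  · have h := keyAux 89017 5 13709 1936 (by norm_num) (by norm_num) (by norm_num)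
      (by exact_mod_cast (show (89017:ℕ)^1936 ≤ 5^13709 by decide +kernel)) (by norm_num)
    push_cast at h ⊢
    simpa [lamJ] using h
  · have h := keyAux 1499750 6 14564 1835 (by norm_num) (by norm_num) (by norm_num)
      (by exact_mod_cast (show (1499750:ℕ)^1835 ≤ 6^14564 by decide +kernel)) (by norm_num)
    push_cast at h ⊢
    simpa [lamJ] using h
  · have h := keyAux 29511244 7 116589 13190 (by norm_num) (by norm_num) (by norm_num)
      (by exact_mod_cast (show (29511244:ℕ)^13190 ≤ 7^116589 by decide +kernel)) (by norm_num)
    push_cast at h ⊢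
    simpa [lamJ] using h
  · have h := keyAux 663184075 8 154583 15825 (by norm_num) (by norm_num) (by norm_num)
      (by exact_mod_cast (show (663184075:ℕ)^15825 ≤ 8^154583 by decide +kernel)) (by norm_num)
    push_cast at h ⊢
    simpa [lamJ] using h

theorem stmt10 (j : ℕ) (hj1 : 2 ≤ j) (hj2 : j ≤ 8) (ξ : ℝ) (hξ : lamJ j ≤ ξ)
    (ξj : ℝ) (hξj : 1 < ξj)
    (heq : (ξj ^ j - ξj ^ (j - 1)) / Real.log ξj = ξ / Real.log ξ) :
    ξj ≤ (ξ / j) ^ ((1 : ℝ) / j) := by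
  have hj0 : (0:ℝ) < (j:ℝ) := by exact_mod_cast Nat.lt_of_lt_of_le Nat.zero_lt_two hj1
  have hjne : (j:ℝ) ≠ 0 := hj0.ne'
  have hlam3 : (3:ℝ)^j ≤ lamJ j := by interval_cases j <;> norm_num [lamJ]
  have hlamj : (j:ℝ) < lamJ j := by interval_cases j <;> norm_num [lamJ]
  have hlam1 : (9:ℝ) ≤ lamJ j := by
    calc (9:ℝ) = 3^2 := by norm_num
      _ ≤ 3^j := pow_le_pow_right₀ (by norm_num) hj1
      _ ≤ lamJ j := hlam3
  have hexpj : Real.exp j ≤ lamJ j := by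
    refine le_trans ?_ hlam3
    rw [show ((j:ℝ)) = (j:ℕ) * (1:ℝ) by push_cast; ring, Real.exp_nat_mul]
    exact pow_le_pow_left₀ (Real.exp_pos 1).le
      (le_trans Real.exp_one_lt_d9.le (by norm_num)) j
  have hξ9 : (9:ℝ) ≤ ξ := le_trans hlam1 hξ
  have hξ1 : (1:ℝ) < ξ := by linarith
  have hξ0 : (0:ℝ) < ξ := by linarith
  have hlogξ : 0 < Real.log ξ := Real.log_pos hξ1
  have hj1' : (1:ℝ) < (j:ℝ) := by exact_mod_cast Nat.lt_of_lt_of_le Nat.one_lt_two hj1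
  have hlogj : 0 < Real.log j := Real.log_pos hj1'
  -- key inequality transported to ξ
  have hmon := psi_mono j (by omega) hexpj hξ
  have hlamL : 0 < Real.log (lamJ j) := Real.log_pos (by linarith)
  have hkey : (j:ℝ) * (Real.log ξ)^j ≤ ξ * (Real.log j)^j := by
    have hN := keyNum j hj1 hj2
    have hcross : lamJ j * (Real.log ξ)^j ≤ ξ * (Real.log (lamJ j))^j := by
      rw [div_le_div_iff₀ (by positivity) (by positivity)] at hmon
      linarith
    have hmul := mul_le_mul hN hcross
      (mul_nonneg (by linarith : (0:ℝ) ≤ lamJ j) (by positivity))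
      (mul_nonneg (by linarith : (0:ℝ) ≤ lamJ j) (by positivity))
    have hpos : 0 < lamJ j * (Real.log (lamJ j))^j := by
      have : (0:ℝ) < lamJ j := by linarith
      positivity
    refine le_of_mul_le_mul_right ?_ hpos
    calc (j:ℝ) * (Real.log ξ)^j * (lamJ j * (Real.log (lamJ j))^j)
        = (j:ℝ) * (Real.log (lamJ j))^j * (lamJ j * (Real.log ξ)^j) := by ring
      _ ≤ lamJ j * (Real.log j)^j * (ξ * (Real.log (lamJ j))^j) := hmul
      _ = ξ * (Real.log j)^j * (lamJ j * (Real.log (lamJ j))^j) := by ring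
  set u : ℝ := (ξ / j) ^ ((1:ℝ)/j) with hu
  have hξj1 : (1:ℝ) < ξ / j := by
    rw [lt_div_iff₀ hj0]
    calc (1:ℝ) * (j:ℝ) = (j:ℝ) := by ring
      _ < lamJ j := hlamj
      _ ≤ ξ := hξ
  have hξjpos : (0:ℝ) < ξ / j := by linarith
  have hu1 : 1 < u := Real.one_lt_rpow_iff_of_pos hξjpos |>.mpr (Or.inl ⟨hξj1, by positivity⟩)
  have hu0 : (0:ℝ) < u := by linarith
  have hupow : u ^ j = ξ / j := by
    rw [hu, ← Real.rpow_natCast ((ξ/j) ^ ((1:ℝ)/j)) j, ← Real.rpow_mul hξjpos.le,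
      one_div_mul_cancel hjne, Real.rpow_one]
  have hlogu : Real.log u = (Real.log ξ - Real.log j) / j := by
    rw [hu, Real.log_rpow hξjpos, Real.log_div hξ0.ne' hjne]
    ring
  have hlogupos : 0 < Real.log u := Real.log_pos hu1
  -- from hkey : log ξ ≤ u * log j
  have hukey : Real.log ξ ≤ u * Real.log j := by
    have hξeq : ξ = (j:ℝ) * u ^ j := by
      rw [hupow]; field_simp
    have h5 : (j:ℝ) * (Real.log ξ)^j ≤ (j:ℝ) * (u * Real.log j)^j := by
      calc (j:ℝ) * (Real.log ξ)^j ≤ ξ * (Real.log j)^j := hkey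
        _ = (j:ℝ) * u^j * (Real.log j)^j := by rw [hξeq]
        _ = (j:ℝ) * (u * Real.log j)^j := by rw [mul_pow]; ring
    have h6 : (Real.log ξ)^j ≤ (u * Real.log j)^j :=
      le_of_mul_le_mul_left (by linarith) hj0
    exact le_of_pow_le_pow_left₀ (by omega) (by positivity) h6
  -- f u ≥ ξ / log ξ
  have hjj : u ^ (j-1) * u = u ^ j := by
    rw [← pow_succ]
    congr 1
    omega
  have hupp : (0:ℝ) < u ^ (j-1) := by positivity
  have hξeq : ξ = (j:ℝ) * u ^ j := by
    rw [hupow]; field_simp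
  have hfu : ξ / Real.log ξ ≤ (u ^ j - u ^ (j-1)) / Real.log u := by
    set A := Real.log ξ with hA
    set C := Real.log (j:ℝ) with hC
    rw [div_le_div_iff₀ hlogξ hlogupos, hlogu, mul_comm ξ _, div_mul_eq_mul_div,
      div_le_iff₀ hj0, hξeq, ← hjj]
    nlinarith [mul_nonneg (mul_nonneg hj0.le hupp.le) (sub_nonneg.mpr hukey)]
  -- conclude
  by_contra hcon
  push_neg at hcon
  have hstrict := fmono (j-1) (by omega) u ξj hu1 hcon
  have hfeq : ∀ a : ℝ, 0 < a →
      a ^ (j-1) * ((a-1)/Real.log a) = (a^j - a^(j-1)) / Real.log a := by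
    intro a ha
    have hh : a ^ (j-1) * a = a ^ j := by
      rw [← pow_succ]; congr 1; omega
    rw [mul_div_assoc', mul_sub, mul_one, hh]
  rw [hfeq u hu0, hfeq ξj (by linarith)] at hstrict
  rw [heq] at hstrict
  linarith
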